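/- Let N ∈ ℕ. For every k ≥ 1 there exists a constant C_k > 0 (depending only on k and N) such that: for all L > 0 and all continuous f, g : [0,1] → ℝ^N with ∫_0^1 ‖f(t)‖ dt ≤ L and ∫_0^1 ‖g(t)‖ dt ≤ L, ( Σ_{I : |I| = k} (S^I(f) − S^I(g))² )^{1/2} ≤ C_k · L^{k-1} · ∫_0^1 ‖f(t) − g(t)‖ dt. (Stability/Lipschitz continuity of the level-k path signature with respect to the L¹ distance between derivatives, i.e. the metric d_ℝ on paths in a Lie group given by the 1-variation of their Euclidean representatives.) -/

import Mathlib

open MeasureTheory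

/-- The standard simplex of nondecreasing `k`-tuples with entries in `[0,1]`. -/
def simplex (k : ℕ) : Set (Fin k → ℝ) :=
  {t | (∀ j, t j ∈ Set.Icc (0:ℝ) 1) ∧ ∀ i j : Fin k, i ≤ j → t i ≤ t j}

/-- The signature coefficient of `f : [0,1] → ℝ^N` (Euclidean norm on `ℝ^N`) with
respect to a multi-index `I`. -/
noncomputable def sig {N : ℕ} (f : ℝ → EuclideanSpace ℝ (Fin N)) {k : ℕ}
    (I : Fin k → Fin N) : ℝ :=
  ∫ t in simplex k, ∏ j, f (t j) (I j)

lemma abs_prod_sub_prod_le {ι : Type*} [DecidableEq ι] (s : Finset ι) (a b : ι → ℝ) :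
    |∏ i ∈ s, a i - ∏ i ∈ s, b i| ≤
      ∑ j ∈ s, |a j - b j| * ∏ i ∈ s.erase j, (|a i| + |b i|) := by
  induction s using Finset.induction_on with
  | empty => simp
  | @insert j s hj ih =>
    rw [Finset.prod_insert hj, Finset.prod_insert hj, Finset.sum_insert hj,
      Finset.erase_insert hj]
    have key : a j * ∏ i ∈ s, a i - b j * ∏ i ∈ s, b i
        = (a j - b j) * ∏ i ∈ s, b i + a j * (∏ i ∈ s, a i - ∏ i ∈ s, b i) := by ring
    rw [key]
    have h1 : |∏ i ∈ s, b i| ≤ ∏ i ∈ s, (|a i| + |b i|) := by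
      rw [Finset.abs_prod]
      exact Finset.prod_le_prod (fun i _ => abs_nonneg _)
        (fun i _ => le_add_of_nonneg_left (abs_nonneg _))
    have h2 : |a j| * |∏ i ∈ s, a i - ∏ i ∈ s, b i|
        ≤ (|a j| + |b j|) * ∑ j' ∈ s, |a j' - b j'| * ∏ i ∈ s.erase j', (|a i| + |b i|) := by
      refine mul_le_mul (le_add_of_nonneg_right (abs_nonneg _)) ih (abs_nonneg _) ?_
      positivity
    calc |(a j - b j) * ∏ i ∈ s, b i + a j * (∏ i ∈ s, a i - ∏ i ∈ s, b i)|
        ≤ |a j - b j| * |∏ i ∈ s, b i| + |a j| * |∏ i ∈ s, a i - ∏ i ∈ s, b i| := by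
          refine (abs_add_le _ _).trans ?_; rw [abs_mul, abs_mul]
      _ ≤ |a j - b j| * ∏ i ∈ s, (|a i| + |b i|)
          + (|a j| + |b j|) * ∑ j' ∈ s, |a j' - b j'| * ∏ i ∈ s.erase j', (|a i| + |b i|) :=
          add_le_add (mul_le_mul_of_nonneg_left h1 (abs_nonneg _)) h2
      _ = |a j - b j| * ∏ i ∈ s, (|a i| + |b i|)
          + ∑ j' ∈ s, |a j' - b j'| * ∏ i ∈ (insert j s).erase j', (|a i| + |b i|) := by
          rw [Finset.mul_sum]
          congr 1
          refine Finset.sum_congr rfl (fun j' hj' => ?_)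
          rw [Finset.erase_insert_of_ne (by rintro rfl; exact hj hj'),
            Finset.prod_insert (fun h => hj (Finset.mem_of_mem_erase h))]
          ring

lemma abs_coord_le_norm {N : ℕ} (x : EuclideanSpace ℝ (Fin N)) (i : Fin N) : |x i| ≤ ‖x‖ := by
  rw [EuclideanSpace.norm_eq, ← Real.sqrt_sq_eq_abs]
  apply Real.sqrt_le_sqrt
  have := Finset.single_le_sum (f := fun j => ‖x j‖ ^ 2) (fun j _ => sq_nonneg _)
    (Finset.mem_univ i)
  simpa [Real.norm_eq_abs, sq_abs] using this

lemma simplex_subset_box (k : ℕ) :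
    simplex k ⊆ Set.pi Set.univ (fun _ : Fin k => Set.Icc (0:ℝ) 1) :=
  fun _ ht i _ => ht.1 i

lemma isCompact_box (k : ℕ) :
    IsCompact (Set.pi Set.univ (fun _ : Fin k => Set.Icc (0:ℝ) 1)) :=
  isCompact_univ_pi fun _ => isCompact_Icc

lemma isClosed_simplex (k : ℕ) : IsClosed (simplex k) := by
  have : simplex k = (Set.pi Set.univ (fun _ : Fin k => Set.Icc (0:ℝ) 1)) ∩
      ⋂ (i : Fin k) (j : Fin k) (_ : i ≤ j), {t : Fin k → ℝ | t i ≤ t j} := by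
    ext t
    simp only [simplex, Set.mem_inter_iff, Set.mem_pi, Set.mem_univ, forall_true_left,
      Set.mem_iInter, Set.mem_setOf_eq]
  rw [this]
  refine (isClosed_set_pi fun i _ => isClosed_Icc).inter ?_
  exact isClosed_iInter fun i => isClosed_iInter fun j => isClosed_iInter fun _ =>
    isClosed_le (continuous_apply i) (continuous_apply j)

lemma isCompact_simplex (k : ℕ) : IsCompact (simplex k) :=
  (isCompact_box k).of_isClosed_subset (isClosed_simplex k) (simplex_subset_box k)

lemma integral_box_prod {k : ℕ} (u : Fin k → ℝ → ℝ) :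
    (∫ t in Set.pi Set.univ (fun _ : Fin k => Set.Icc (0:ℝ) 1), ∏ i, u i (t i))
      = ∏ i, ∫ x in Set.Icc (0:ℝ) 1, u i x := by
  have hbox : MeasurableSet (Set.pi Set.univ (fun _ : Fin k => Set.Icc (0:ℝ) 1)) :=
    MeasurableSet.univ_pi fun _ => measurableSet_Icc
  rw [← integral_indicator hbox]
  have heq : (Set.pi Set.univ (fun _ : Fin k => Set.Icc (0:ℝ) 1)).indicator
      (fun t => ∏ i, u i (t i))
      = fun t => ∏ i, (Set.Icc (0:ℝ) 1).indicator (u i) (t i) := by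
    funext t
    by_cases h : t ∈ Set.pi Set.univ (fun _ : Fin k => Set.Icc (0:ℝ) 1)
    · rw [Set.indicator_of_mem h]
      exact Finset.prod_congr rfl fun i _ =>
        (Set.indicator_of_mem (h i (Set.mem_univ i)) _).symm
    · rw [Set.indicator_of_notMem h]
      simp only [Set.mem_pi, Set.mem_univ, forall_true_left] at h
      push_neg at h
      obtain ⟨i, hi⟩ := h
      exact (Finset.prod_eq_zero (Finset.mem_univ i)
        (Set.indicator_of_notMem hi _)).symm
  rw [heq, MeasureTheory.integral_fintype_prod_volume_eq_prod
    (f := fun i => (Set.Icc (0:ℝ) 1).indicator (u i))]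
  exact Finset.prod_congr rfl fun i _ => integral_indicator measurableSet_Icc

/-- Continuity on the box of the coordinate product. -/
lemma continuousOn_coord_prod {N k : ℕ} (f : ℝ → EuclideanSpace ℝ (Fin N))
    (hf : ContinuousOn f (Set.Icc 0 1)) (I : Fin k → Fin N) :
    ContinuousOn (fun t : Fin k → ℝ => ∏ j, f (t j) (I j))
      (Set.pi Set.univ (fun _ : Fin k => Set.Icc (0:ℝ) 1)) := by
  apply continuousOn_finset_prod
  intro j _
  have h1 : ContinuousOn (fun t : Fin k → ℝ => f (t j))
      (Set.pi Set.univ (fun _ : Fin k => Set.Icc (0:ℝ) 1)) :=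
    hf.comp (continuous_apply j).continuousOn (fun t ht => ht j (Set.mem_univ j))
  exact (EuclideanSpace.proj (I j)).continuous.comp_continuousOn h1

/-- **Stability (Lipschitz continuity) of the level-`k` path signature** with
respect to the `L¹` distance between derivatives: for every `k ≥ 1` there is a
constant `C_k > 0` (depending only on `k` and `N`) such that for all `L > 0` and
all continuous `f, g` with 1-variation at most `L`,
`‖π_k(S(f) − S(g))‖ ≤ C_k L^{k-1} ∫_0^1 ‖f − g‖`. -/
theorem signature_stability (N : ℕ) (k : ℕ) (hk : 1 ≤ k) :
    ∃ C : ℝ, 0 < C ∧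
      ∀ L : ℝ, 0 < L →
        ∀ f g : ℝ → EuclideanSpace ℝ (Fin N),
          ContinuousOn f (Set.Icc 0 1) → ContinuousOn g (Set.Icc 0 1) →
          (∫ t in (0:ℝ)..1, ‖f t‖) ≤ L → (∫ t in (0:ℝ)..1, ‖g t‖) ≤ L →
          Real.sqrt (∑ I : Fin k → Fin N, (sig f I - sig g I) ^ 2) ≤
            C * L ^ (k - 1) * ∫ t in (0:ℝ)..1, ‖f t - g t‖ := by
  set n : ℕ := Fintype.card (Fin k → Fin N) with hn
  refine ⟨(n : ℝ) * k * 2 ^ (k - 1) + 1, by positivity, ?_⟩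
  intro L hL f g hf hg hfL hgL
  set box := Set.pi Set.univ (fun _ : Fin k => Set.Icc (0:ℝ) 1) with hboxdef
  have hboxm : MeasurableSet box := MeasurableSet.univ_pi fun _ => measurableSet_Icc
  have hSm : MeasurableSet (simplex k) := (isClosed_simplex k).measurableSet
  set d : ℝ → ℝ := fun t => ‖f t - g t‖ with hd
  set h : ℝ → ℝ := fun t => ‖f t‖ + ‖g t‖ with hh
  have hdc : ContinuousOn d (Set.Icc 0 1) := (hf.sub hg).norm
  have hhc : ContinuousOn h (Set.Icc 0 1) := hf.norm.add hg.norm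
  -- one-dimensional integrals
  set D : ℝ := ∫ t in (0:ℝ)..1, ‖f t - g t‖ with hD
  set H : ℝ := ∫ x in Set.Icc (0:ℝ) 1, h x with hH
  have hIccIoc : ∀ u : ℝ → ℝ, (∫ x in Set.Icc (0:ℝ) 1, u x) = ∫ t in (0:ℝ)..1, u t := by
    intro u
    rw [intervalIntegral.integral_of_le zero_le_one, integral_Icc_eq_integral_Ioc]
  have hDIcc : (∫ x in Set.Icc (0:ℝ) 1, d x) = D := hIccIoc _
  have hD0 : 0 ≤ D := by
    rw [← hDIcc]
    exact setIntegral_nonneg measurableSet_Icc fun x _ => norm_nonneg _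
  have hH0 : 0 ≤ H := setIntegral_nonneg measurableSet_Icc fun x _ => by positivity
  have hH2L : H ≤ 2 * L := by
    have hfi : IntegrableOn (fun t => ‖f t‖) (Set.Icc (0:ℝ) 1) :=
      hf.norm.integrableOn_compact isCompact_Icc
    have hgi : IntegrableOn (fun t => ‖g t‖) (Set.Icc (0:ℝ) 1) :=
      hg.norm.integrableOn_compact isCompact_Icc
    have : H = (∫ x in Set.Icc (0:ℝ) 1, ‖f x‖) + ∫ x in Set.Icc (0:ℝ) 1, ‖g x‖ :=
      integral_add hfi hgi
    rw [this, hIccIoc (fun t => ‖f t‖), hIccIoc (fun t => ‖g t‖)]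
    linarith
  -- per-index bound
  set M : ℝ := (k : ℝ) * (D * H ^ (k - 1)) with hM
  have hM0 : 0 ≤ M := by positivity
  have key : ∀ I : Fin k → Fin N, |sig f I - sig g I| ≤ M := by
    intro I
    set Pf : (Fin k → ℝ) → ℝ := fun t => ∏ j, f (t j) (I j) with hPf
    set Pg : (Fin k → ℝ) → ℝ := fun t => ∏ j, g (t j) (I j) with hPg
    have hPfc : ContinuousOn Pf box := continuousOn_coord_prod f hf I
    have hPgc : ContinuousOn Pg box := continuousOn_coord_prod g hg I
    have hPfi : IntegrableOn Pf (simplex k) :=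
      (hPfc.mono (simplex_subset_box k)).integrableOn_compact (isCompact_simplex k)
    have hPgi : IntegrableOn Pg (simplex k) :=
      (hPgc.mono (simplex_subset_box k)).integrableOn_compact (isCompact_simplex k)
    set Φ : (Fin k → ℝ) → ℝ :=
      fun t => ∑ j : Fin k, d (t j) * ∏ i ∈ Finset.univ.erase j, h (t i) with hΦ
    have hΦc : ContinuousOn Φ box := by
      apply continuousOn_finset_sum
      intro j _
      have h1 : ContinuousOn (fun t : Fin k → ℝ => d (t j)) box :=
        hdc.comp (continuous_apply j).continuousOn (fun t ht => ht j (Set.mem_univ j))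
      refine h1.mul ?_
      apply continuousOn_finset_prod
      intro i _
      exact hhc.comp (continuous_apply i).continuousOn (fun t ht => ht i (Set.mem_univ i))
    have hΦ0 : ∀ t, 0 ≤ Φ t := by
      intro t
      apply Finset.sum_nonneg
      intro j _
      apply mul_nonneg (norm_nonneg _)
      exact Finset.prod_nonneg fun i _ => by positivity
    have hΦibox : IntegrableOn Φ box := hΦc.integrableOn_compact (isCompact_box k)
    have hΦiS : IntegrableOn Φ (simplex k) :=
      (hΦc.mono (simplex_subset_box k)).integrableOn_compact (isCompact_simplex k)
    have hptwise : ∀ t ∈ simplex k, |Pf t - Pg t| ≤ Φ t := by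
      intro t ht
      refine (abs_prod_sub_prod_le Finset.univ (fun j => f (t j) (I j))
        (fun j => g (t j) (I j))).trans ?_
      apply Finset.sum_le_sum
      intro j _
      have hab : |f (t j) (I j) - g (t j) (I j)| ≤ d (t j) := by
        have : f (t j) (I j) - g (t j) (I j) = (f (t j) - g (t j)) (I j) := by
          simp [PiLp.sub_apply]
        rw [this]
        exact abs_coord_le_norm _ _
      refine mul_le_mul hab (Finset.prod_le_prod (fun i _ => by positivity) fun i _ => ?_)
        (Finset.prod_nonneg fun i _ => by positivity) (norm_nonneg _)
      exact add_le_add (abs_coord_le_norm _ _) (abs_coord_le_norm _ _)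
    have step1 : |sig f I - sig g I| ≤ ∫ t in simplex k, Φ t := by
      have hsub : sig f I - sig g I = ∫ t in simplex k, (Pf t - Pg t) :=
        (integral_sub hPfi hPgi).symm
      rw [hsub]
      have habs : |∫ t in simplex k, (Pf t - Pg t)| ≤ ∫ t in simplex k, |Pf t - Pg t| := by
        simpa [Real.norm_eq_abs] using
          norm_integral_le_integral_norm (μ := volume.restrict (simplex k))
            (fun t => Pf t - Pg t)
      exact habs.trans (setIntegral_mono_on (hPfi.sub hPgi).abs hΦiS hSm hptwise)
    have step2 : (∫ t in simplex k, Φ t) ≤ ∫ t in box, Φ t := by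
      refine setIntegral_mono_set hΦibox (Filter.Eventually.of_forall hΦ0) ?_
      exact HasSubset.Subset.eventuallyLE (simplex_subset_box k)
    have step3 : (∫ t in box, Φ t) = M := by
      have hterm : ∀ j : Fin k,
          (∫ t in box, d (t j) * ∏ i ∈ Finset.univ.erase j, h (t i)) = D * H ^ (k - 1) := by
        intro j
        classical
        set u : Fin k → ℝ → ℝ := fun i => if i = j then d else h with hu
        have heq : (fun t : Fin k → ℝ => d (t j) * ∏ i ∈ Finset.univ.erase j, h (t i))
            = fun t => ∏ i, u i (t i) := by
          funext t
          rw [← Finset.mul_prod_erase Finset.univ (fun i => u i (t i)) (Finset.mem_univ j)]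
          congr 1
          · simp [hu]
          · refine Finset.prod_congr rfl fun i hi => ?_
            have : i ≠ j := Finset.ne_of_mem_erase hi
            simp [hu, this]
        rw [heq, integral_box_prod]
        rw [← Finset.mul_prod_erase Finset.univ (fun i => ∫ x in Set.Icc (0:ℝ) 1, u i x)
          (Finset.mem_univ j)]
        have h1 : (∫ x in Set.Icc (0:ℝ) 1, u j x) = D := by
          simp only [hu, if_pos rfl]; exact hDIcc
        have h2 : (∏ i ∈ Finset.univ.erase j, ∫ x in Set.Icc (0:ℝ) 1, u i x)
            = H ^ (k - 1) := by
          rw [Finset.prod_congr rfl fun i hi => ?_]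
          · rw [Finset.prod_const, Finset.card_erase_of_mem (Finset.mem_univ j),
              Finset.card_univ, Fintype.card_fin]
          · have : i ≠ j := Finset.ne_of_mem_erase hi
            simp [hu, this]
            exact hH.symm
        rw [h1, h2]
      rw [hΦ, integral_finset_sum]
      · rw [Finset.sum_congr rfl fun j _ => hterm j, Finset.sum_const, Finset.card_univ,
          Fintype.card_fin, nsmul_eq_mul, hM]
      · intro j _
        refine ContinuousOn.integrableOn_compact (isCompact_box k) ?_
        have h1 : ContinuousOn (fun t : Fin k → ℝ => d (t j)) box :=
          hdc.comp (continuous_apply j).continuousOn (fun t ht => ht j (Set.mem_univ j))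
        refine h1.mul ?_
        apply continuousOn_finset_prod
        intro i _
        exact hhc.comp (continuous_apply i).continuousOn (fun t ht => ht i (Set.mem_univ i))
    calc |sig f I - sig g I| ≤ ∫ t in simplex k, Φ t := step1
      _ ≤ ∫ t in box, Φ t := step2
      _ = M := step3
  -- assemble
  have hsum : (∑ I : Fin k → Fin N, (sig f I - sig g I) ^ 2) ≤ (n : ℝ) * M ^ 2 := by
    calc (∑ I : Fin k → Fin N, (sig f I - sig g I) ^ 2)
        ≤ ∑ _I : Fin k → Fin N, M ^ 2 := by
          refine Finset.sum_le_sum fun I _ => ?_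
          rw [← sq_abs]
          exact pow_le_pow_left₀ (abs_nonneg _) (key I) 2
      _ = (n : ℝ) * M ^ 2 := by rw [Finset.sum_const, Finset.card_univ, nsmul_eq_mul]
  have hsqrt : Real.sqrt (∑ I : Fin k → Fin N, (sig f I - sig g I) ^ 2) ≤ (n : ℝ) * M := by
    refine (Real.sqrt_le_sqrt hsum).trans ?_
    rw [Real.sqrt_mul (Nat.cast_nonneg n), Real.sqrt_sq hM0]
    refine mul_le_mul_of_nonneg_right ?_ hM0
    calc Real.sqrt (n : ℝ) ≤ Real.sqrt ((n : ℝ) ^ 2) := by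
          apply Real.sqrt_le_sqrt
          exact_mod_cast Nat.le_self_pow two_ne_zero n
      _ = (n : ℝ) := Real.sqrt_sq (Nat.cast_nonneg n)
  refine hsqrt.trans ?_
  have hHp : H ^ (k - 1) ≤ 2 ^ (k - 1) * L ^ (k - 1) := by
    rw [← mul_pow]
    exact pow_le_pow_left₀ hH0 hH2L _
  calc (n : ℝ) * M = (n : ℝ) * ((k : ℝ) * (D * H ^ (k - 1))) := by rw [hM]
    _ ≤ (n : ℝ) * ((k : ℝ) * (D * (2 ^ (k - 1) * L ^ (k - 1)))) := by
        refine mul_le_mul_of_nonneg_left ?_ (Nat.cast_nonneg n)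
        refine mul_le_mul_of_nonneg_left ?_ (Nat.cast_nonneg k)
        exact mul_le_mul_of_nonneg_left hHp hD0
    _ = ((n : ℝ) * k * 2 ^ (k - 1)) * L ^ (k - 1) * D := by ring
    _ ≤ ((n : ℝ) * k * 2 ^ (k - 1) + 1) * L ^ (k - 1) * D := by
        refine mul_le_mul_of_nonneg_right (mul_le_mul_of_nonneg_right ?_ (by positivity))
          hD0
        linarith
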